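/- Let B̄ be a symmetric positive-definite real 3×3 matrix, let (n, a, b) be an orthonormal triad of vectors in ℝ³, and let C > 0, E ≥ 0 be real numbers. Then the symmetric 2×2 matrix M with entries M₁₁ = C n·(B̄n) + E a·(B̄⁻¹a), M₂₂ = C n·(B̄n) + E b·(B̄⁻¹b), M₁₂ = M₂₁ = E a·(B̄⁻¹b) is positive definite; in particular both of its eigenvalues are positive, so both squared wave speeds of the two superposed shear waves in a deformed Mooney–Rivlin material are positive. -/

import Mathlib

open Matrix

/-- The acoustic matrix of the coupled shear-wave system in a deformed
Mooney–Rivlin material is positive definite, hence both squared wave speeds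
are positive. -/
theorem acoustic_matrix_posDef
    (Bbar : Matrix (Fin 3) (Fin 3) ℝ) (hB : Bbar.PosDef)
    (n a b : Fin 3 → ℝ)
    (hnn : n ⬝ᵥ n = 1) (haa : a ⬝ᵥ a = 1) (hbb : b ⬝ᵥ b = 1)
    (hna : n ⬝ᵥ a = 0) (hnb : n ⬝ᵥ b = 0) (hab : a ⬝ᵥ b = 0)
    (C E : ℝ) (hC : 0 < C) (hE : 0 ≤ E) :
    (!![C * (n ⬝ᵥ Bbar.mulVec n) + E * (a ⬝ᵥ Bbar⁻¹.mulVec a),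
        E * (a ⬝ᵥ Bbar⁻¹.mulVec b);
        E * (a ⬝ᵥ Bbar⁻¹.mulVec b),
        C * (n ⬝ᵥ Bbar.mulVec n) + E * (b ⬝ᵥ Bbar⁻¹.mulVec b)] :
      Matrix (Fin 2) (Fin 2) ℝ).PosDef := by
  have hBinv : (Bbar⁻¹).PosDef := hB.inv
  have hn0 : n ≠ 0 := by
    intro h; rw [h] at hnn; simp at hnn
  have hnBn : 0 < n ⬝ᵥ Bbar.mulVec n := by
    simpa using (posDef_iff_dotProduct_mulVec.mp hB).2 hn0
  have hsym : (Bbar⁻¹)ᵀ = Bbar⁻¹ := by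
    have := hBinv.1
    simpa [Matrix.IsHermitian, Matrix.conjTranspose_eq_transpose_of_trivial] using this
  have hcomm : b ⬝ᵥ Bbar⁻¹.mulVec a = a ⬝ᵥ Bbar⁻¹.mulVec b := by
    rw [Matrix.dotProduct_mulVec, ← Matrix.mulVec_transpose, hsym, dotProduct_comm]
  rw [posDef_iff_dotProduct_mulVec]
  constructor
  · ext i j
    fin_cases i <;> fin_cases j <;>
      simp [Matrix.conjTranspose_apply]
  · intro x hx
    have hx2 : 0 < x 0 ^ 2 + x 1 ^ 2 := by
      rcases (by
        by_contra h
        push_neg at h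
        exact hx (by ext i; fin_cases i <;> simp [h.1, h.2]) : x 0 ≠ 0 ∨ x 1 ≠ 0) with h | h
      · positivity
      · positivity
    set v : Fin 3 → ℝ := x 0 • a + x 1 • b with hv
    have hEpart : 0 ≤ v ⬝ᵥ Bbar⁻¹.mulVec v := by
      simpa using (posSemidef_iff_dotProduct_mulVec.mp hBinv.posSemidef).2 v
    have expand : v ⬝ᵥ Bbar⁻¹.mulVec v =
        x 0 ^ 2 * (a ⬝ᵥ Bbar⁻¹.mulVec a) + 2 * (x 0 * x 1) * (a ⬝ᵥ Bbar⁻¹.mulVec b)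
          + x 1 ^ 2 * (b ⬝ᵥ Bbar⁻¹.mulVec b) := by
      simp only [hv, Matrix.mulVec_add, Matrix.mulVec_smul, dotProduct_add,
        add_dotProduct, smul_dotProduct, dotProduct_smul,
        smul_eq_mul, hcomm]
      ring
    have key : star x ⬝ᵥ (!![C * (n ⬝ᵥ Bbar.mulVec n) + E * (a ⬝ᵥ Bbar⁻¹.mulVec a),
        E * (a ⬝ᵥ Bbar⁻¹.mulVec b);
        E * (a ⬝ᵥ Bbar⁻¹.mulVec b),
        C * (n ⬝ᵥ Bbar.mulVec n) + E * (b ⬝ᵥ Bbar⁻¹.mulVec b)] :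
      Matrix (Fin 2) (Fin 2) ℝ).mulVec x =
        C * (n ⬝ᵥ Bbar.mulVec n) * (x 0 ^ 2 + x 1 ^ 2) + E * (v ⬝ᵥ Bbar⁻¹.mulVec v) := by
      rw [expand]
      simp [Matrix.mulVec, dotProduct, Fin.sum_univ_two]
      ring
    rw [key]
    have : 0 < C * (n ⬝ᵥ Bbar.mulVec n) * (x 0 ^ 2 + x 1 ^ 2) := by positivity
    nlinarith [mul_nonneg hE hEpart]
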